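/- Let G be a finite tree rooted at o and g : E(G) → ℝ. Then ∑_{v∈V(G)} (∑_{e∈ℓ(v)} g(e))² ≤ (max_{v∈V} ∑_{e∈ℓ(v)} |T_e|) · ∑_{e∈E} g(e)². -/

import Mathlib

open Finset

/-- Edges on the path from `o` to `v` in a tree, encoded by their endpoints farther
from `o`: the vertices `u ≠ o` lying on the path from `o` to `v`. -/
noncomputable def pathE {V : Type*} [Fintype V] [DecidableEq V] (G : SimpleGraph V) (o v : V) :
    Finset V :=
  Finset.univ.filter fun u => u ≠ o ∧ G.dist o u + G.dist u v = G.dist o v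

/-- The vertex set `T_e` of the subtree hanging below the edge `e` encoded by `u`:
all vertices whose root-path passes through `u`. -/
noncomputable def subT {V : Type*} [Fintype V] [DecidableEq V] (G : SimpleGraph V) (o u : V) :
    Finset V :=
  Finset.univ.filter fun x => u ∈ pathE G o x

/-- Hardy inequality with weights `a_e = |T_e|`:
`∑_v (∑_{e ∈ ℓ(v)} g(e))² ≤ (max_v ∑_{e ∈ ℓ(v)} |T_e|) · ∑_e g(e)²`. -/
theorem hardy_subtree_weights {V : Type*} [Fintype V] [DecidableEq V]
    (G : SimpleGraph V) (hG : G.IsTree) (o : V) (g : V → ℝ) :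
    ∑ v : V, (∑ u ∈ pathE G o v, g u) ^ 2 ≤
      ((Finset.univ.sup fun v => ∑ u ∈ pathE G o v, (subT G o u).card : ℕ) : ℝ) *
        ∑ u ∈ Finset.univ.filter fun u => u ≠ o, (g u) ^ 2 := by
  classical
  set M : ℕ := Finset.univ.sup fun v => ∑ u ∈ pathE G o v, (subT G o u).card with hM
  have hmem : ∀ u : V, u ≠ o → u ∈ subT G o u := by
    intro u hu
    simp [subT, pathE, hu]
  have hone : ∀ u : V, u ≠ o → 1 ≤ (subT G o u).card := by
    intro u hu
    exact Finset.card_pos.mpr ⟨u, hmem u hu⟩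
  have hpath_ne : ∀ v u : V, u ∈ pathE G o v → u ≠ o := by
    intro v u hu; exact (Finset.mem_filter.mp hu).2.1
  -- Cauchy-Schwarz per vertex
  have step1 : ∀ v : V, (∑ u ∈ pathE G o v, g u) ^ 2 ≤
      (M : ℝ) * ∑ u ∈ pathE G o v, g u ^ 2 / (subT G o u).card := by
    intro v
    have hcs := Finset.sum_mul_sq_le_sq_mul_sq (pathE G o v)
      (fun u => Real.sqrt ((subT G o u).card)) (fun u => g u / Real.sqrt ((subT G o u).card))
    have heq1 : ∑ u ∈ pathE G o v,
        Real.sqrt ((subT G o u).card) * (g u / Real.sqrt ((subT G o u).card)) =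
        ∑ u ∈ pathE G o v, g u := by
      refine Finset.sum_congr rfl fun u hu => ?_
      have h1 : (1:ℝ) ≤ ((subT G o u).card : ℝ) := by
        exact_mod_cast hone u (hpath_ne v u hu)
      have hs : Real.sqrt ((subT G o u).card) ≠ 0 := by
        positivity
      field_simp
    have heq2 : ∑ u ∈ pathE G o v, Real.sqrt ((subT G o u).card) ^ 2 =
        ∑ u ∈ pathE G o v, ((subT G o u).card : ℝ) := by
      refine Finset.sum_congr rfl fun u hu => ?_
      exact Real.sq_sqrt (by positivity)
    have heq3 : ∑ u ∈ pathE G o v, (g u / Real.sqrt ((subT G o u).card)) ^ 2 =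
        ∑ u ∈ pathE G o v, g u ^ 2 / ((subT G o u).card : ℝ) := by
      refine Finset.sum_congr rfl fun u hu => ?_
      rw [div_pow, Real.sq_sqrt (by positivity)]
    rw [heq1, heq2, heq3] at hcs
    refine hcs.trans (mul_le_mul_of_nonneg_right ?_ ?_)
    · have : (∑ u ∈ pathE G o v, (subT G o u).card) ≤ M :=
        Finset.le_sup (f := fun v => ∑ u ∈ pathE G o v, (subT G o u).card) (Finset.mem_univ v)
      calc ∑ u ∈ pathE G o v, ((subT G o u).card : ℝ)
          = ((∑ u ∈ pathE G o v, (subT G o u).card : ℕ) : ℝ) := by push_cast; ring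
        _ ≤ (M : ℝ) := by exact_mod_cast this
    · refine Finset.sum_nonneg fun u hu => ?_
      positivity
  calc ∑ v : V, (∑ u ∈ pathE G o v, g u) ^ 2
      ≤ ∑ v : V, (M : ℝ) * ∑ u ∈ pathE G o v, g u ^ 2 / (subT G o u).card :=
        Finset.sum_le_sum fun v _ => step1 v
    _ = (M : ℝ) * ∑ v : V, ∑ u ∈ pathE G o v, g u ^ 2 / (subT G o u).card := by
        rw [Finset.mul_sum]
    _ = (M : ℝ) * ∑ u ∈ Finset.univ.filter fun u => u ≠ o, (g u) ^ 2 := by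
        congr 1
        have swap : ∑ v : V, ∑ u ∈ pathE G o v, g u ^ 2 / ((subT G o u).card : ℝ)
            = ∑ u : V, ((subT G o u).card : ℝ) * (g u ^ 2 / ((subT G o u).card : ℝ)) := by
          simp_rw [pathE, Finset.sum_filter]
          rw [Finset.sum_comm]
          refine Finset.sum_congr rfl fun u _ => ?_
          rw [← Finset.sum_filter, Finset.sum_const, nsmul_eq_mul]
          congr 2
          · simp [subT, pathE]
        rw [swap]
        rw [← Finset.sum_filter_add_sum_filter_not Finset.univ (fun u => u ≠ o)]
        have hzero : ∑ u ∈ Finset.univ.filter fun u => ¬ u ≠ o,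
            ((subT G o u).card : ℝ) * (g u ^ 2 / ((subT G o u).card : ℝ)) = 0 := by
          refine Finset.sum_eq_zero fun u hu => ?_
          have huo : u = o := by simpa using (Finset.mem_filter.mp hu).2
          have h0 : subT G o o = ∅ := by
            ext x; simp [subT, pathE]
          rw [huo, h0]
          simp
        rw [hzero, add_zero]
        refine Finset.sum_congr rfl fun u hu => ?_
        have hne : u ≠ o := (Finset.mem_filter.mp hu).2
        have hc : ((subT G o u).card : ℝ) ≠ 0 := by
          have := hone u hne; positivity
        field_simp
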